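/- Let u : [0,1] → ℝ be continuously differentiable with u(0) = u(1) = 0. Then ∫₀¹ u(x)⁴ dx ≤ 2 (∫₀¹ u(x)² dx)^{3/2} (∫₀¹ u′(x)² dx)^{1/2}; equivalently, |u|₄ ≤ 2^{1/4} |u|₂^{3/4} |u′|₂^{1/4}. (The one-dimensional Ladyzhenskaya/Gagliardo–Nirenberg interpolation inequality used in the energy estimates of Lemma 2.1.) -/

import Mathlib

open MeasureTheory intervalIntegral

/-- Cauchy–Schwarz on the unit interval for continuous functions. -/
lemma cs_unit_interval (f g : ℝ → ℝ) (hf : Continuous f) (hg : Continuous g) :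
    ∫ x in (0:ℝ)..1, |f x| * |g x| ≤
      (∫ x in (0:ℝ)..1, f x ^ 2) ^ ((1:ℝ)/2) * (∫ x in (0:ℝ)..1, g x ^ 2) ^ ((1:ℝ)/2) := by
  have hmeas : ∀ h : ℝ → ℝ, Continuous h →
      MemLp (fun x => |h x|) (ENNReal.ofReal 2) (volume.restrict (Set.Ioc (0:ℝ) 1)) := by
    intro h hc
    refine MemLp.of_bound (hc.abs.aestronglyMeasurable)
      (sSup (abs ∘ h '' Set.Icc 0 1)) ?_
    rw [ae_restrict_iff' measurableSet_Ioc]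
    filter_upwards with x hx
    have : |h x| ∈ abs ∘ h '' Set.Icc 0 1 :=
      ⟨x, ⟨le_of_lt hx.1, hx.2⟩, rfl⟩
    have hbdd : BddAbove (abs ∘ h '' Set.Icc 0 1) :=
      (isCompact_Icc.image (hc.abs)).bddAbove
    simpa [Real.norm_eq_abs, abs_abs] using le_csSup hbdd this
  have key := MeasureTheory.integral_mul_le_Lp_mul_Lq_of_nonneg
    (μ := volume.restrict (Set.Ioc (0:ℝ) 1)) (p := 2) (q := 2)
    (Real.holderConjugate_iff_eq_conjExponent one_lt_two |>.mpr (by norm_num))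
    (f := fun x => |f x|) (g := fun x => |g x|)
    (Filter.Eventually.of_forall fun x => abs_nonneg _)
    (Filter.Eventually.of_forall fun x => abs_nonneg _)
    (hmeas f hf) (hmeas g hg)
  have e1 : ∀ y : ℝ, |y| ^ (2:ℝ) = y ^ 2 := by
    intro y
    rw [show ((2:ℝ)) = ((2:ℕ):ℝ) by norm_num, Real.rpow_natCast, sq_abs]
  rw [intervalIntegral.integral_of_le (by norm_num : (0:ℝ) ≤ 1),
    intervalIntegral.integral_of_le (by norm_num : (0:ℝ) ≤ 1),
    intervalIntegral.integral_of_le (by norm_num : (0:ℝ) ≤ 1)]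
  simpa [e1] using key

theorem ladyzhenskaya_unit_interval (u : ℝ → ℝ)
    (hu : ContDiff ℝ 1 u) (h0 : u 0 = 0) (h1 : u 1 = 0) :
    ∫ x in (0:ℝ)..1, u x ^ 4 ≤
      2 * (∫ x in (0:ℝ)..1, u x ^ 2) ^ ((3:ℝ)/2) *
        (∫ x in (0:ℝ)..1, deriv u x ^ 2) ^ ((1:ℝ)/2) := by
  have hc : Continuous u := hu.continuous
  have hc' : Continuous (deriv u) := (hu.continuous_deriv le_rfl)
  set A := ∫ x in (0:ℝ)..1, u x ^ 2 with hA
  set B := ∫ x in (0:ℝ)..1, deriv u x ^ 2 with hB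
  have hA0 : 0 ≤ A := intervalIntegral.integral_nonneg (by norm_num)
    (fun x _ => sq_nonneg _)
  have hB0 : 0 ≤ B := intervalIntegral.integral_nonneg (by norm_num)
    (fun x _ => sq_nonneg _)
  set C : ℝ := 2 * A ^ ((1:ℝ)/2) * B ^ ((1:ℝ)/2) with hC
  -- pointwise bound: u x ^ 2 ≤ C for x ∈ [0,1]
  have hpt : ∀ x ∈ Set.Icc (0:ℝ) 1, u x ^ 2 ≤ C := by
    intro x hx
    have hderiv : ∀ t ∈ Set.uIcc (0:ℝ) x,
        HasDerivAt (fun t => u t ^ 2) (2 * u t * deriv u t) t := by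
      intro t _
      have h := ((hu.differentiable one_ne_zero) t).hasDerivAt
      simpa [mul_comm, mul_assoc, mul_left_comm] using h.fun_pow 2
    have hcont2 : Continuous (fun t => 2 * u t * deriv u t) :=
      (continuous_const.mul hc).mul hc'
    have hcont3 : Continuous (fun t => 2 * (|u t| * |deriv u t|)) :=
      continuous_const.mul (hc.abs.mul hc'.abs)
    have hint : IntervalIntegrable (fun t => 2 * u t * deriv u t) volume 0 x :=
      hcont2.intervalIntegrable 0 x
    have hftc : ∫ t in (0:ℝ)..x, 2 * u t * deriv u t = u x ^ 2 - u 0 ^ 2 :=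
      intervalIntegral.integral_eq_sub_of_hasDerivAt (f := fun t => u t ^ 2) (f' := fun t => 2 * u t * deriv u t) hderiv hint
    have hux : u x ^ 2 = ∫ t in (0:ℝ)..x, 2 * u t * deriv u t := by
      rw [hftc, h0]; ring
    have hmono : ∫ t in (0:ℝ)..x, 2 * u t * deriv u t ≤
        ∫ t in (0:ℝ)..1, 2 * (|u t| * |deriv u t|) := by
      calc ∫ t in (0:ℝ)..x, 2 * u t * deriv u t
          ≤ ∫ t in (0:ℝ)..x, 2 * (|u t| * |deriv u t|) := by
            apply intervalIntegral.integral_mono_on hx.1 hint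
              (hcont3.intervalIntegrable 0 x)
            intro t _
            calc 2 * u t * deriv u t ≤ |2 * u t * deriv u t| := le_abs_self _
              _ = 2 * (|u t| * |deriv u t|) := by
                  rw [abs_mul, abs_mul]; simp [abs_of_nonneg]; ring
        _ ≤ ∫ t in (0:ℝ)..1, 2 * (|u t| * |deriv u t|) := by
            apply intervalIntegral.integral_mono_interval le_rfl hx.1 hx.2
            · filter_upwards with t
              positivity
            · exact hcont3.intervalIntegrable 0 1
    have hcs := cs_unit_interval u (deriv u) hc hc'
    have : ∫ t in (0:ℝ)..1, 2 * (|u t| * |deriv u t|)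
        = 2 * ∫ t in (0:ℝ)..1, |u t| * |deriv u t| := by
      rw [intervalIntegral.integral_const_mul]
    rw [hux]
    refine hmono.trans ?_
    rw [this, hC]
    rw [mul_assoc]
    exact mul_le_mul_of_nonneg_left hcs (by norm_num)
  -- integrate the pointwise bound
  have hmain : ∫ x in (0:ℝ)..1, u x ^ 4 ≤ C * A := by
    have h4 : ∫ x in (0:ℝ)..1, u x ^ 4 ≤ ∫ x in (0:ℝ)..1, C * u x ^ 2 := by
      apply intervalIntegral.integral_mono_on (by norm_num)
        ((hc.pow 4).intervalIntegrable 0 1)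
        ((continuous_const.mul (hc.pow 2)).intervalIntegrable 0 1)
      intro x hx
      have h1 : u x ^ 4 = u x ^ 2 * u x ^ 2 := by ring
      show u x ^ 4 ≤ C * u x ^ 2
      rw [h1]
      exact mul_le_mul_of_nonneg_right (hpt x hx) (sq_nonneg _)
    rw [intervalIntegral.integral_const_mul] at h4
    exact h4
  refine hmain.trans_eq ?_
  have hA32 : A ^ ((3:ℝ)/2) = A ^ ((1:ℝ)/2) * A := by
    rw [show ((3:ℝ)/2) = (1:ℝ)/2 + 1 by norm_num,
      Real.rpow_add' hA0 (by norm_num), Real.rpow_one]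
  rw [hC, hA32]; ring
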